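/- Let X be a set of s points in generic position in P^{n_1} × ⋯ × P^{n_k}. If there exist l, m ∈ {1,...,k} (not necessarily distinct) and j ∈ N^k with j - e_l - e_m ∈ N^k such that H_X(j) = H_X(j - e_l) = H_X(j - e_l - e_m) = s, then (I_X)_j contains no minimal generators of I_X; in fact (I_X)_j = R_{e_l}(I_X)_{j - e_l} + R_{e_m}(I_X)_{j - e_m}. -/

import Mathlib

open MvPolynomial

namespace MultiProjPoints

/-- The variable set of the multigraded coordinate ring of
`ℙ^{n 0} × ⋯ × ℙ^{n (k-1)}`: variables `x_{i,j}` with `i : Fin k`, `0 ≤ j ≤ n i`. -/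
abbrev Var (k : ℕ) (n : Fin k → ℕ) := Σ i : Fin k, Fin (n i + 1)

/-- The `ℕ^k`-grading weight: `deg x_{i,j} = e_i`. -/
def wt (k : ℕ) (n : Fin k → ℕ) : Var k n → (Fin k → ℕ) := fun v => Pi.single v.1 1

/-- The `i`-th standard basis vector of `ℕ^k`. -/
def e {k : ℕ} (l : Fin k) : Fin k → ℕ := Pi.single l 1

variable (K : Type) [Field K]

/-- The graded piece `R_d` of the `ℕ^k`-graded polynomial ring. -/
noncomputable def piece (k : ℕ) (n : Fin k → ℕ) (d : Fin k → ℕ) :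
    Submodule K (MvPolynomial (Var k n) K) :=
  weightedHomogeneousSubmodule K (wt k n) d

/-- `N(d) = ∏ binom (n i + d i) (d i)`, the dimension of `R_d`. -/
def NN (k : ℕ) (n : Fin k → ℕ) (d : Fin k → ℕ) : ℕ := ∏ i, (n i + d i).choose (d i)

/-- A (representative of a) point of `ℙ^{n 0} × ⋯ × ℙ^{n (k-1)}`. -/
def PointRep (k : ℕ) (n : Fin k → ℕ) := (i : Fin k) → Fin (n i + 1) → K

/-- A valid representative: every coordinate block is nonzero. -/
def IsRep {k : ℕ} {n : Fin k → ℕ} (P : PointRep K k n) : Prop := ∀ i, P i ≠ 0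

/-- Two representatives define the same point of multi-projective space. -/
def ProjEq {k : ℕ} {n : Fin k → ℕ} (P Q : PointRep K k n) : Prop :=
  ∀ i, ∃ c : K, c ≠ 0 ∧ P i = c • Q i

/-- A tuple of representatives giving `s` distinct points. -/
def SPoints {k : ℕ} {n : Fin k → ℕ} {s : ℕ} (P : Fin s → PointRep K k n) : Prop :=
  (∀ a, IsRep K (P a)) ∧ ∀ a b, a ≠ b → ¬ ProjEq K (P a) (P b)

/-- The defining ideal `I_X` of the set of points: all polynomials vanishing on
the multi-cone over the points, i.e. the intersection of the point ideals. -/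
noncomputable def idealOfPoints {k : ℕ} {n : Fin k → ℕ} {s : ℕ}
    (P : Fin s → PointRep K k n) : Ideal (MvPolynomial (Var k n) K) :=
  ⨅ (a : Fin s), ⨅ (c : Fin k → K),
    RingHom.ker (eval (fun v : Var k n => c v.1 * P a v.1 v.2))

/-- The degree-`d` piece `I_d` of an ideal, as a `K`-subspace. -/
noncomputable def idealPiece {k : ℕ} {n : Fin k → ℕ}
    (I : Ideal (MvPolynomial (Var k n) K)) (d : Fin k → ℕ) :
    Submodule K (MvPolynomial (Var k n) K) :=
  (Submodule.restrictScalars K I) ⊓ piece K k n d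

/-- The multigraded Hilbert function of `X`:
`H_X(d) = dim (R/I_X)_d = dim R_d - dim (I_X)_d`. -/
noncomputable def hilbert {k : ℕ} {n : Fin k → ℕ} {s : ℕ}
    (P : Fin s → PointRep K k n) (d : Fin k → ℕ) : ℕ :=
  NN k n d - Module.finrank K (idealPiece K (idealOfPoints K P) d)

/-- Generic position: `s` distinct points whose Hilbert function is maximal. -/
def GenericPosition {k : ℕ} {n : Fin k → ℕ} {s : ℕ} (P : Fin s → PointRep K k n) : Prop :=
  SPoints K P ∧ ∀ d : Fin k → ℕ, hilbert K P d = min (NN k n d) s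

/-- `R_{e_l}·V`: the span of all products of a variable of degree `e_l`
with an element of `V`. -/
noncomputable def mulSpan {k : ℕ} {n : Fin k → ℕ} (l : Fin k)
    (V : Submodule K (MvPolynomial (Var k n) K)) :
    Submodule K (MvPolynomial (Var k n) K) :=
  Submodule.span K {g | ∃ (m : Fin (n l + 1)) (f : MvPolynomial (Var k n) K),
    f ∈ V ∧ g = X (⟨l, m⟩ : Var k n) * f}

/-- `D = min { i ∈ ℕ^k | N(i) > s }` (minimal elements for the componentwise order). -/
def Dset (k : ℕ) (n : Fin k → ℕ) (s : ℕ) : Set (Fin k → ℕ) :=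
  {i | s < NN k n i ∧ ∀ j : Fin k → ℕ, s < NN k n j → j ≤ i → j = i}

/-- The irrelevant maximal ideal of `R`, generated by all the variables. -/
noncomputable def irrelevant (k : ℕ) (n : Fin k → ℕ) : Ideal (MvPolynomial (Var k n) K) :=
  Ideal.span (Set.range (X : Var k n → MvPolynomial (Var k n) K))


section Aux

variable {K} {k : ℕ} {n : Fin k → ℕ}

lemma weight_coord (σ : Var k n →₀ ℕ) (i : Fin k) :
    Finsupp.weight (wt k n) σ i = ∑ p : Fin (n i + 1), σ ⟨i, p⟩ := by
  rw [Finsupp.weight_apply, Finsupp.sum]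
  rw [Finset.sum_apply]
  have h1 : ∀ v : Var k n, σ v • wt k n v i = σ v * (if i = v.1 then 1 else 0) := by
    intro v
    simp [wt, Pi.single_apply]
  calc (∑ v ∈ σ.support, (σ v • wt k n v) i)
      = ∑ v ∈ σ.support, σ v * (if i = v.1 then 1 else 0) := by
        refine Finset.sum_congr rfl fun v _ => ?_
        simpa using h1 v
    _ = ∑ v : Var k n, σ v * (if i = v.1 then 1 else 0) := by
        refine Finset.sum_subset (Finset.subset_univ _) fun v _ hv => ?_
        simp [Finsupp.notMem_support_iff.mp hv]
    _ = ∑ i' : Fin k, ∑ p : Fin (n i' + 1), σ ⟨i', p⟩ * (if i = i' then 1 else 0) := by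
        rw [← Finset.univ_sigma_univ, Finset.sum_sigma]
    _ = ∑ p : Fin (n i + 1), σ ⟨i, p⟩ := by
        simp only [mul_ite, mul_one, mul_zero, Finset.sum_ite_irrel,
          Finset.sum_const_zero, Finset.sum_ite_eq]
        simp

lemma prod_coord (σ : Var k n →₀ ℕ) (c : Fin k → K) :
    (∏ v ∈ σ.support, c v.1 ^ σ v) = ∏ i : Fin k, c i ^ (Finsupp.weight (wt k n) σ i) := by
  calc ∏ v ∈ σ.support, c v.1 ^ σ v
      = ∏ v : Var k n, c v.1 ^ σ v := by
        refine Finset.prod_subset (Finset.subset_univ _) fun v _ hv => ?_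
        simp [Finsupp.notMem_support_iff.mp hv]
    _ = ∏ i : Fin k, ∏ p : Fin (n i + 1), c i ^ σ ⟨i, p⟩ := by
        rw [← Finset.univ_sigma_univ, Finset.prod_sigma]
    _ = ∏ i : Fin k, c i ^ (∑ p : Fin (n i + 1), σ ⟨i, p⟩) := by
        simp [Finset.prod_pow_eq_pow_sum]
    _ = _ := by simp [weight_coord]

lemma eval_scale {d : Fin k → ℕ} {f : MvPolynomial (Var k n) K}
    (hf : f ∈ piece K k n d) (c : Fin k → K) (q : Var k n → K) :
    eval (fun v => c v.1 * q v) f = (∏ i, c i ^ d i) * eval q f := by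
  conv_lhs => rw [← f.support_sum_monomial_coeff]
  conv_rhs => rw [← f.support_sum_monomial_coeff]
  rw [map_sum, map_sum, Finset.mul_sum]
  refine Finset.sum_congr rfl fun σ hσ => ?_
  have hw : Finsupp.weight (wt k n) σ = d := hf (MvPolynomial.mem_support_iff.mp hσ)
  rw [eval_monomial, eval_monomial, Finsupp.prod, Finsupp.prod]
  simp_rw [mul_pow]
  rw [Finset.prod_mul_distrib, prod_coord σ c, hw]
  ring

lemma mem_ideal_of_eval {s : ℕ} (P : Fin s → PointRep K k n) {d : Fin k → ℕ}
    {f : MvPolynomial (Var k n) K}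
    (hf : f ∈ piece K k n d) (h : ∀ a, eval (fun v : Var k n => P a v.1 v.2) f = 0) :
    f ∈ idealOfPoints K P := by
  simp only [idealOfPoints, Ideal.mem_iInf]
  intro a c
  rw [RingHom.mem_ker]
  have he := eval_scale hf c (fun v => P a v.1 v.2)
  rw [he, h a, mul_zero]

lemma eval_eq_zero_of_mem {s : ℕ} (P : Fin s → PointRep K k n)
    {f : MvPolynomial (Var k n) K}
    (hf : f ∈ idealOfPoints K P) (a : Fin s) :
    eval (fun v : Var k n => P a v.1 v.2) f = 0 := by
  simp only [idealOfPoints, Ideal.mem_iInf] at hf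
  have := hf a (fun _ => 1)
  rw [RingHom.mem_ker] at this
  simpa using this

lemma exists_linear_form {s : ℕ} (P : Fin s → PointRep K k n) [Infinite K]
    (hP : ∀ a, IsRep K (P a)) (m : Fin k) :
    ∃ (c : Fin (n m + 1) → K),
      ((∑ i, MvPolynomial.C (c i) * MvPolynomial.X (⟨m, i⟩ : Var k n)) ∈ piece K k n (e m)) ∧
      (∑ i, MvPolynomial.C (c i) * MvPolynomial.X (⟨m, i⟩ : Var k n)) ≠ 0 ∧
      ∀ a, eval (fun v : Var k n => P a v.1 v.2)
        (∑ i, MvPolynomial.C (c i) * MvPolynomial.X (⟨m, i⟩ : Var k n)) ≠ 0 := by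
  classical
  set Q : MvPolynomial (Fin (n m + 1)) K :=
    (MvPolynomial.X 0) * ∏ a : Fin s, (∑ i, MvPolynomial.C (P a m i) * MvPolynomial.X i)
    with hQdef
  have hfac : ∀ a : Fin s,
      (∑ i, MvPolynomial.C (P a m i) * MvPolynomial.X i :
        MvPolynomial (Fin (n m + 1)) K) ≠ 0 := by
    intro a hzero
    apply hP a m
    funext i
    have h2 := congrArg (eval (Pi.single i (1 : K))) hzero
    simpa [map_sum, Pi.single_apply, mul_ite, Finset.sum_ite_eq'] using h2
  have hQ0 : Q ≠ 0 :=
    mul_ne_zero (MvPolynomial.X_ne_zero _)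
      (Finset.prod_ne_zero_iff.mpr fun a _ => hfac a)
  have hex : ∃ c : Fin (n m + 1) → K, eval c Q ≠ 0 := by
    by_contra h
    push_neg at h
    exact hQ0 (MvPolynomial.funext fun x => by rw [h x, map_zero])
  obtain ⟨c, hc⟩ := hex
  have hcQ : eval c Q = c 0 * ∏ a : Fin s, (∑ i, P a m i * c i) := by
    simp [hQdef]
  rw [hcQ] at hc
  have hc0 : c 0 ≠ 0 := fun h => hc (by rw [h, zero_mul])
  have hcprod : ∀ a : Fin s, (∑ i, P a m i * c i) ≠ 0 := by
    intro a
    have := right_ne_zero_of_mul hc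
    exact Finset.prod_ne_zero_iff.mp this a (Finset.mem_univ a)
  refine ⟨c, ?_, ?_, ?_⟩
  · refine Submodule.sum_mem _ fun i _ => ?_
    rw [MvPolynomial.C_mul']
    refine Submodule.smul_mem _ _ ?_
    rw [piece, mem_weightedHomogeneousSubmodule]
    exact isWeightedHomogeneous_X K (wt k n) (⟨m, i⟩ : Var k n)
  · intro hzero
    have h2 := congrArg (MvPolynomial.coeff (Finsupp.single (⟨m, 0⟩ : Var k n) 1)) hzero
    rw [MvPolynomial.coeff_sum] at h2
    have key : ∀ i : Fin (n m + 1),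
        MvPolynomial.coeff (Finsupp.single (⟨m, 0⟩ : Var k n) 1)
          (MvPolynomial.C (c i) * MvPolynomial.X (⟨m, i⟩ : Var k n))
        = if i = 0 then c i else 0 := by
      intro i
      rw [MvPolynomial.coeff_C_mul, MvPolynomial.coeff_X']
      by_cases h : i = 0
      · subst h; simp
      · have : (Finsupp.single (⟨m, i⟩ : Var k n) (1:ℕ) ≠
            Finsupp.single (⟨m, 0⟩ : Var k n) 1) := by
          intro hs
          rw [Finsupp.single_left_inj one_ne_zero] at hs
          exact h (congrArg (fun x => x) (by
            have := sigma_mk_injective hs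
            exact this))
        simp [this, h]
    rw [Finset.sum_congr rfl fun i _ => key i] at h2
    simp at h2
    exact hc0 h2
  · intro a hzero
    apply hcprod a
    have : eval (fun v : Var k n => P a v.1 v.2)
        (∑ i, MvPolynomial.C (c i) * MvPolynomial.X (⟨m, i⟩ : Var k n))
        = ∑ i, P a m i * c i := by
      simp [map_sum, mul_comm]
    rw [this] at hzero
    exact hzero

lemma piece_mul {d1 d2 : Fin k → ℕ} {f g : MvPolynomial (Var k n) K}
    (hf : f ∈ piece K k n d1) (hg : g ∈ piece K k n d2) :
    f * g ∈ piece K k n (d1 + d2) :=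
  IsWeightedHomogeneous.mul hf hg

lemma weight_single_var (v : Var k n) :
    Finsupp.weight (wt k n) (Finsupp.single v 1) = e v.1 := by
  rw [Finsupp.weight_apply, Finsupp.sum_single_index (by simp)]
  simp [wt, e]

lemma piece_le_iSup_map (l : Fin k) (j : Fin k → ℕ) (hj : 1 ≤ j l) :
    piece K k n j ≤ ⨆ i : Fin (n l + 1),
      Submodule.map (LinearMap.mulLeft K (MvPolynomial.X (⟨l, i⟩ : Var k n)))
        (piece K k n (j - e l)) := by
  intro f hf
  rw [← f.support_sum_monomial_coeff]
  refine Submodule.sum_mem _ fun σ hσ => ?_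
  have hw : Finsupp.weight (wt k n) σ = j := hf (MvPolynomial.mem_support_iff.mp hσ)
  have hsum : (∑ p : Fin (n l + 1), σ ⟨l, p⟩) = j l := by
    rw [← weight_coord, hw]
  have hpos : ∃ p, σ ⟨l, p⟩ ≠ 0 := by
    by_contra h
    push_neg at h
    rw [Finset.sum_eq_zero (fun p _ => h p)] at hsum
    omega
  obtain ⟨p, hp⟩ := hpos
  have hle : Finsupp.single (⟨l, p⟩ : Var k n) 1 ≤ σ :=
    Finsupp.single_le_iff.mpr (Nat.one_le_iff_ne_zero.mpr hp)
  set v : Var k n := ⟨l, p⟩ with hv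
  set τ := σ - Finsupp.single v 1 with hτdef
  have hτ : τ + Finsupp.single v 1 = σ := tsub_add_cancel_of_le hle
  have hwτ : Finsupp.weight (wt k n) τ = j - e l := by
    have hadd : Finsupp.weight (wt k n) τ + e l = j := by
      rw [← weight_single_var v, ← map_add, hτ, hw]
    exact eq_tsub_of_add_eq hadd
  have hmono : (monomial σ) (MvPolynomial.coeff σ f)
      = MvPolynomial.X v * (monomial τ) (MvPolynomial.coeff σ f) := by
    show _ = monomial (Finsupp.single v 1) 1 * _
    rw [MvPolynomial.monomial_mul, one_mul, add_comm, hτ]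
  refine Submodule.mem_iSup_of_mem p ?_
  rw [hmono]
  refine Submodule.mem_map_of_mem ?_
  rw [piece, mem_weightedHomogeneousSubmodule]
  exact isWeightedHomogeneous_monomial _ _ _ hwτ

lemma card_tau (N d : ℕ) :
    Nat.card {τ : Fin N →₀ ℕ // (τ.sum fun _ x => x) = d} = (N + d - 1).choose d := by
  classical
  have e3 : {τ : Fin N →₀ ℕ // (τ.sum fun _ x => x) = d} ≃ Sym (Fin N) d := by
    refine Equiv.subtypeEquiv (Multiset.toFinsupp (α := Fin N)).symm.toEquiv fun τ => ?_
    rw [show ((Multiset.toFinsupp (α := Fin N)).symm.toEquiv τ)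
        = Finsupp.toMultiset τ from rfl]
    rw [Finsupp.card_toMultiset]
    rfl
  rw [Nat.card_congr e3, Nat.card_eq_fintype_card, Sym.card_sym_eq_choose]
  simp

lemma card_S (d : Fin k → ℕ) :
    Nat.card {σ : Var k n →₀ ℕ // Finsupp.weight (wt k n) σ = d} = NN k n d := by
  classical
  have e1 : {σ : Var k n →₀ ℕ // Finsupp.weight (wt k n) σ = d}
      ≃ {g : ∀ i : Fin k, (Fin (n i + 1) →₀ ℕ) //
          ∀ i, ((g i).sum fun _ x => x) = d i} := by
    refine Equiv.subtypeEquiv (Finsupp.sigmaFinsuppEquivPiFinsupp) fun σ => ?_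
    rw [funext_iff]
    refine forall_congr' fun i => ?_
    rw [Finsupp.sum_fintype _ _ (fun _ => rfl)]
    have : ∀ p, (Finsupp.sigmaFinsuppEquivPiFinsupp σ) i p = σ ⟨i, p⟩ := fun p => rfl
    rw [Finset.sum_congr rfl fun p _ => this p]
    rw [weight_coord]
  have e2 : {g : ∀ i : Fin k, (Fin (n i + 1) →₀ ℕ) //
          ∀ i, ((g i).sum fun _ x => x) = d i}
      ≃ ∀ i : Fin k, {τ : Fin (n i + 1) →₀ ℕ // (τ.sum fun _ x => x) = d i} :=
    Equiv.subtypePiEquivPi (p := fun i (τ : Fin (n i + 1) →₀ ℕ) => (τ.sum fun _ x => x) = d i)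
  rw [Nat.card_congr (e1.trans e2), Nat.card_pi]
  rw [NN]
  refine Finset.prod_congr rfl fun i _ => ?_
  rw [card_tau]
  congr 1
  omega

lemma S_finite (d : Fin k → ℕ) :
    {σ : Var k n →₀ ℕ | Finsupp.weight (wt k n) σ = d}.Finite := by
  classical
  apply Set.Finite.subset
    (Set.finite_Icc (0 : Var k n →₀ ℕ) (Finsupp.equivFunOnFinite.symm fun v => d v.1))
  intro σ hσ
  rw [Set.mem_Icc]
  refine ⟨zero_le, ?_⟩
  rw [Finsupp.le_def]
  intro v
  have h1 : σ v ≤ ∑ p : Fin (n v.1 + 1), σ ⟨v.1, p⟩ := by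
    have := Finset.single_le_sum (f := fun p : Fin (n v.1 + 1) => σ ⟨v.1, p⟩)
      (fun p _ => Nat.zero_le _) (Finset.mem_univ v.2)
    simpa using this
  rw [← weight_coord, hσ] at h1
  simpa using h1

lemma fd_piece (d : Fin k → ℕ) : FiniteDimensional K (piece K k n d) := by
  classical
  rw [piece, weightedHomogeneousSubmodule_eq_finsupp_supported]
  haveI := (S_finite (n := n) d).fintype
  exact (AddMonoidAlgebra.supportedEquivFinsupp
    (S := K) (R := K) {σ : Var k n →₀ ℕ | Finsupp.weight (wt k n) σ = d}).symm.finiteDimensional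

lemma finrank_piece (d : Fin k → ℕ) :
    Module.finrank K (piece K k n d) = NN k n d := by
  classical
  rw [piece, weightedHomogeneousSubmodule_eq_finsupp_supported]
  haveI := (S_finite (n := n) d).fintype
  refine Eq.trans (LinearEquiv.finrank_eq (AddMonoidAlgebra.supportedEquivFinsupp
    (S := K) (R := K) {σ : Var k n →₀ ℕ | Finsupp.weight (wt k n) σ = d})) ?_
  rw [Module.finrank_finsupp_self, ← Nat.card_eq_fintype_card]
  exact card_S d

end Aux
theorem no_generator_of_stable_two (K : Type) [Field K] [IsAlgClosed K] [CharZero K]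
    (k : ℕ) (n : Fin k → ℕ) {s : ℕ} (P : Fin s → PointRep K k n)
    (hgen : GenericPosition K P) (l m : Fin k) (j : Fin k → ℕ)
    (hj : e l + e m ≤ j)
    (h1 : hilbert K P j = s) (h2 : hilbert K P (j - e l) = s)
    (h3 : hilbert K P (j - e l - e m) = s) :
    idealPiece K (idealOfPoints K P) j
      = mulSpan K l (idealPiece K (idealOfPoints K P) (j - e l))
        ⊔ mulSpan K m (idealPiece K (idealOfPoints K P) (j - e m)) := by
  classical
  obtain ⟨hSP, hHF⟩ := hgen
  have key : ∀ i, (e l) i + (e m) i ≤ j i := fun i => hj i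
  have F1 : e l + (j - e l) = j := by
    funext i; have hk := key i
    simp only [e, Pi.add_apply, Pi.sub_apply, Pi.single_apply] at hk ⊢
    split_ifs at hk ⊢ <;> omega
  have F2 : e m + (j - e l - e m) = j - e l := by
    funext i; have hk := key i
    simp only [e, Pi.add_apply, Pi.sub_apply, Pi.single_apply] at hk ⊢
    split_ifs at hk ⊢ <;> omega
  have F3 : e l + (j - e l - e m) = j - e m := by
    funext i; have hk := key i
    simp only [e, Pi.add_apply, Pi.sub_apply, Pi.single_apply] at hk ⊢
    split_ifs at hk ⊢ <;> omega
  have F4 : e m + (j - e m) = j := by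
    funext i; have hk := key i
    simp only [e, Pi.add_apply, Pi.sub_apply, Pi.single_apply] at hk ⊢
    split_ifs at hk ⊢ <;> omega
  have F5 : 1 ≤ j l := by
    have hk := key l
    simp only [e, Pi.add_apply, Pi.single_apply] at hk
    split_ifs at hk <;> omega
  obtain ⟨c, hMp, hM0, hMev⟩ := exists_linear_form P hSP.1 m
  set M : MvPolynomial (Var k n) K :=
    ∑ i, MvPolynomial.C (c i) * MvPolynomial.X (⟨m, i⟩ : Var k n) with hMdef
  have hinj : Function.Injective (LinearMap.mulLeft K M) := by
    intro x y hxy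
    simp only [LinearMap.mulLeft_apply] at hxy
    exact mul_left_cancel₀ hM0 hxy
  have hmemIP : ∀ (d : Fin k → ℕ) (x : MvPolynomial (Var k n) K),
      x ∈ idealPiece K (idealOfPoints K P) d ↔
        x ∈ idealOfPoints K P ∧ x ∈ piece K k n d := by
    intro d x
    simp [idealPiece, Submodule.mem_inf]
  have hIPle : ∀ d : Fin k → ℕ,
      idealPiece K (idealOfPoints K P) d ≤ piece K k n d :=
    fun d x hx => ((hmemIP d x).mp hx).2
  haveI hfd1 : FiniteDimensional K (piece K k n (j - e l)) := fd_piece _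
  haveI hfd' : FiniteDimensional K (piece K k n (j - e l - e m)) := fd_piece _
  haveI hfdm : FiniteDimensional K (piece K k n (j - e m)) := fd_piece _
  haveI hfdj : FiniteDimensional K (piece K k n j) := fd_piece _
  haveI hA : FiniteDimensional K (idealPiece K (idealOfPoints K P) (j - e l)) :=
    Submodule.finiteDimensional_of_le (hIPle _)
  haveI hA' : FiniteDimensional K (idealPiece K (idealOfPoints K P) (j - e l - e m)) :=
    Submodule.finiteDimensional_of_le (hIPle _)
  haveI hAm : FiniteDimensional K (idealPiece K (idealOfPoints K P) (j - e m)) :=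
    Submodule.finiteDimensional_of_le (hIPle _)
  have hrankIP : ∀ d : Fin k → ℕ, hilbert K P d = s →
      Module.finrank K (idealPiece K (idealOfPoints K P) d) = NN k n d - s
        ∧ s ≤ NN k n d := by
    intro d hd
    haveI : FiniteDimensional K (piece K k n d) := fd_piece _
    have hle : Module.finrank K (idealPiece K (idealOfPoints K P) d) ≤ NN k n d := by
      rw [← finrank_piece (K := K) (n := n) d]
      exact Submodule.finrank_mono (hIPle d)
    have hsle : s ≤ NN k n d := by
      have hmin := hHF d
      rw [hd] at hmin
      exact min_eq_right_iff.mp hmin.symm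
    simp only [hilbert] at hd
    exact ⟨by omega, hsle⟩
  have hBle : Submodule.map (LinearMap.mulLeft K M) (piece K k n (j - e l - e m))
      ≤ piece K k n (j - e l) := by
    rintro x ⟨w, hw, rfl⟩
    simp only [LinearMap.mulLeft_apply]
    have hmul := piece_mul hMp hw
    rwa [F2] at hmul
  haveI hB : FiniteDimensional K
      (Submodule.map (LinearMap.mulLeft K M) (piece K k n (j - e l - e m))) :=
    Submodule.finiteDimensional_of_le hBle
  have hABinf : idealPiece K (idealOfPoints K P) (j - e l)
      ⊓ Submodule.map (LinearMap.mulLeft K M) (piece K k n (j - e l - e m))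
      = Submodule.map (LinearMap.mulLeft K M)
          (idealPiece K (idealOfPoints K P) (j - e l - e m)) := by
    ext x
    constructor
    · rintro ⟨hxA, w, hw, rfl⟩
      simp only [LinearMap.mulLeft_apply] at hxA ⊢
      have hxI : M * w ∈ idealOfPoints K P := ((hmemIP _ _).mp hxA).1
      have hwI : w ∈ idealOfPoints K P := by
        refine mem_ideal_of_eval P hw fun a => ?_
        have h0 := eval_eq_zero_of_mem P hxI a
        rw [map_mul] at h0
        rcases mul_eq_zero.mp h0 with h | h
        · exact absurd h (hMev a)
        · exact h
      exact ⟨w, (hmemIP _ _).mpr ⟨hwI, hw⟩, rfl⟩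
    · rintro ⟨w, hwIP, rfl⟩
      obtain ⟨hwI, hw⟩ := (hmemIP _ _).mp hwIP
      simp only [LinearMap.mulLeft_apply]
      refine ⟨(hmemIP _ _).mpr ⟨Ideal.mul_mem_left _ M hwI, ?_⟩, ⟨w, hw, rfl⟩⟩
      have hmul := piece_mul hMp hw
      rwa [F2] at hmul
  have hrB : Module.finrank K
      (Submodule.map (LinearMap.mulLeft K M) (piece K k n (j - e l - e m)))
      = NN k n (j - e l - e m) := by
    rw [← finrank_piece (K := K) (n := n) (j - e l - e m)]
    exact (LinearEquiv.finrank_eq (Submodule.equivMapOfInjective _ hinj _)).symm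
  have hrBI : Module.finrank K (Submodule.map (LinearMap.mulLeft K M)
        (idealPiece K (idealOfPoints K P) (j - e l - e m)))
      = Module.finrank K (idealPiece K (idealOfPoints K P) (j - e l - e m)) :=
    (LinearEquiv.finrank_eq (Submodule.equivMapOfInjective _ hinj _)).symm
  obtain ⟨hr1, hs1⟩ := hrankIP _ h2
  obtain ⟨hr', hs'⟩ := hrankIP _ h3
  have hsup := Submodule.finrank_sup_add_finrank_inf_eq
      (idealPiece K (idealOfPoints K P) (j - e l))
      (Submodule.map (LinearMap.mulLeft K M) (piece K k n (j - e l - e m)))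
  rw [hABinf, hrBI, hr', hrB, hr1] at hsup
  have hrsup : Module.finrank K
      ↥((idealPiece K (idealOfPoints K P) (j - e l))
        ⊔ Submodule.map (LinearMap.mulLeft K M) (piece K k n (j - e l - e m)))
      = NN k n (j - e l) := by omega
  have hkey3 : idealPiece K (idealOfPoints K P) (j - e l)
      ⊔ Submodule.map (LinearMap.mulLeft K M) (piece K k n (j - e l - e m))
      = piece K k n (j - e l) := by
    refine Submodule.eq_of_le_of_finrank_le (sup_le (hIPle _) hBle) ?_
    rw [hrsup, finrank_piece]
  have hXmem : ∀ (l' : Fin k) (i : Fin (n l' + 1)),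
      (MvPolynomial.X (⟨l', i⟩ : Var k n) : MvPolynomial (Var k n) K)
        ∈ piece K k n (e l') := by
    intro l' i
    rw [piece, mem_weightedHomogeneousSubmodule]
    exact isWeightedHomogeneous_X K _ _
  have hms : ∀ (l' : Fin k) (d : Fin k → ℕ), e l' + d = j →
      mulSpan K l' (idealPiece K (idealOfPoints K P) d)
        ≤ idealPiece K (idealOfPoints K P) j := by
    intro l' d hd
    rw [mulSpan, Submodule.span_le]
    rintro g ⟨i, f, hf, rfl⟩
    obtain ⟨hfI, hfp⟩ := (hmemIP _ _).mp hf
    refine (hmemIP _ _).mpr ⟨Ideal.mul_mem_left _ _ hfI, ?_⟩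
    have hmul := piece_mul (hXmem l' i) hfp
    rwa [hd] at hmul
  refine le_antisymm ?_ (sup_le (hms l _ F1) (hms m _ F4))
  intro f hf
  obtain ⟨hfI, hfp⟩ := (hmemIP _ _).mp hf
  have hup : f ∈ ⨆ i : Fin (n l + 1),
      Submodule.map (LinearMap.mulLeft K (MvPolynomial.X (⟨l, i⟩ : Var k n)))
        (piece K k n (j - e l)) := piece_le_iSup_map l j F5 hfp
  have hbound : (⨆ i : Fin (n l + 1),
      Submodule.map (LinearMap.mulLeft K (MvPolynomial.X (⟨l, i⟩ : Var k n)))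
        (piece K k n (j - e l)))
      ≤ mulSpan K l (idealPiece K (idealOfPoints K P) (j - e l))
        ⊔ Submodule.map (LinearMap.mulLeft K M) (piece K k n (j - e m)) := by
    refine iSup_le fun i => ?_
    rw [← hkey3, Submodule.map_sup]
    refine sup_le (le_trans ?_ le_sup_left) (le_trans ?_ le_sup_right)
    · rintro g ⟨g', hg', rfl⟩
      exact Submodule.subset_span ⟨i, g', hg', by simp [LinearMap.mulLeft_apply]⟩
    · rintro g ⟨g'', ⟨w, hw, rfl⟩, rfl⟩
      refine ⟨MvPolynomial.X (⟨l, i⟩ : Var k n) * w, ?_, ?_⟩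
      · have hmul := piece_mul (hXmem l i) hw
        rwa [F3] at hmul
      · simp only [LinearMap.mulLeft_apply]
        ring
  have hf2 := hbound hup
  obtain ⟨g, hg, b, hb, hgb⟩ := Submodule.mem_sup.mp hf2
  obtain ⟨w, hw, rfl⟩ := hb
  simp only [LinearMap.mulLeft_apply] at hgb
  have hgI : g ∈ idealOfPoints K P := by
    have hle : mulSpan K l (idealPiece K (idealOfPoints K P) (j - e l))
        ≤ Submodule.restrictScalars K (idealOfPoints K P) := by
      rw [mulSpan, Submodule.span_le]
      rintro g' ⟨i, f', hf', rfl⟩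
      exact Ideal.mul_mem_left _ _ ((hmemIP _ _).mp hf').1
    exact hle hg
  have hMwI : M * w ∈ idealOfPoints K P := by
    have heq : M * w = f - g := by rw [← hgb]; ring
    rw [heq]
    exact Ideal.sub_mem _ hfI hgI
  have hwI : w ∈ idealOfPoints K P := by
    refine mem_ideal_of_eval P hw fun a => ?_
    have h0 := eval_eq_zero_of_mem P hMwI a
    rw [map_mul] at h0
    rcases mul_eq_zero.mp h0 with h | h
    · exact absurd h (hMev a)
    · exact h
  have hMw : M * w ∈ mulSpan K m (idealPiece K (idealOfPoints K P) (j - e m)) := by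
    rw [hMdef, Finset.sum_mul]
    refine Submodule.sum_mem _ fun i _ => ?_
    have heq : MvPolynomial.C (c i) * MvPolynomial.X (⟨m, i⟩ : Var k n) * w
        = c i • (MvPolynomial.X (⟨m, i⟩ : Var k n) * w) := by
      rw [MvPolynomial.C_mul', smul_mul_assoc]
    rw [heq]
    exact Submodule.smul_mem _ _
      (Submodule.subset_span ⟨i, w, (hmemIP _ _).mpr ⟨hwI, hw⟩, rfl⟩)
  rw [← hgb]
  exact Submodule.add_mem_sup hg hMw

end MultiProjPoints
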